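/- The random-to-random operator factors as R2R_n = Σ_{a ∈ A} sh_a ∘ ∂_a, where the sum is over all letters of the alphabet, as linear operators on the span of words of length n. -/

import Mathlib

open Finsupp

variable {A : Type} [DecidableEq A]

/-- The formal sum of `Finsupp.single w 1` over a list of words. -/
noncomputable def wordSum (l : List (List A)) : List A →₀ ℂ :=
  (l.map fun w => Finsupp.single w (1 : ℂ)).sum

/-- All words obtained from `w` by inserting the letter `a` at one position. -/
def insertions (a : A) : List A → List (List A)
  | [] => [[a]]
  | b :: t => (a :: b :: t) :: (insertions a t).map (b :: ·)

/-- All words obtained from `w` by deleting one occurrence of the letter `a`. -/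
def deletions (a : A) : List A → List (List A)
  | [] => []
  | b :: t => (if b = a then [t] else []) ++ (deletions a t).map (b :: ·)

/-- All words obtained from `w` by replacing one occurrence of `b` by `a`. -/
def replacements (b a : A) : List A → List (List A)
  | [] => []
  | c :: t => (if c = b then [a :: t] else []) ++ (replacements b a t).map (c :: ·)

/-- The insertion operator `sh_a`. -/
noncomputable def shOp (a : A) : (List A →₀ ℂ) →ₗ[ℂ] (List A →₀ ℂ) :=
  Finsupp.linearCombination ℂ (fun w => wordSum (insertions a w))

/-- The deletion operator `∂_a`. -/
noncomputable def delOp (a : A) : (List A →₀ ℂ) →ₗ[ℂ] (List A →₀ ℂ) :=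
  Finsupp.linearCombination ℂ (fun w => wordSum (deletions a w))

/-- The replacement operator `Θ_{b,a}`. -/
noncomputable def repOp (b a : A) : (List A →₀ ℂ) →ₗ[ℂ] (List A →₀ ℂ) :=
  Finsupp.linearCombination ℂ (fun w => wordSum (replacements b a w))

/-- Remove the letter at position `i` of `w` and reinsert it at position `j` (0-based). -/
def moveCard (w : List A) (i j : ℕ) : List A :=
  match w[i]? with
  | Option.none => w
  | Option.some c => (w.eraseIdx i).insertIdx j c

/-- The random-to-random operator applied to a single word: the sum over all ordered
pairs of positions `(i, j)` of removing the letter at position `i` and reinserting it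
at position `j` (the diagonal `i = j` contributes `w.length • w`). -/
noncomputable def r2rWord (w : List A) : List A →₀ ℂ :=
  ∑ i ∈ Finset.range w.length, ∑ j ∈ Finset.range w.length,
    Finsupp.single (moveCard w i j) (1 : ℂ)

/-- The (unnormalized) random-to-random operator `R2R`. -/
noncomputable def r2rOp : (List A →₀ ℂ) →ₗ[ℂ] (List A →₀ ℂ) :=
  Finsupp.linearCombination ℂ r2rWord

/-- Random-to-top on a single word: move the letter at each position to the end. -/
noncomputable def r2tWord (w : List A) : List A →₀ ℂ :=
  ∑ i ∈ Finset.range w.length, Finsupp.single (moveCard w i (w.length - 1)) (1 : ℂ)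

/-- The (unnormalized) random-to-top operator `R2T`. -/
noncomputable def r2tOp : (List A →₀ ℂ) →ₗ[ℂ] (List A →₀ ℂ) :=
  Finsupp.linearCombination ℂ r2tWord

/-- Top-to-random on a single word: move the last letter to each position. -/
noncomputable def t2rWord (w : List A) : List A →₀ ℂ :=
  ∑ j ∈ Finset.range w.length, Finsupp.single (moveCard w (w.length - 1) j) (1 : ℂ)

/-- The (unnormalized) top-to-random operator `T2R`. -/
noncomputable def t2rOp : (List A →₀ ℂ) →ₗ[ℂ] (List A →₀ ℂ) :=
  Finsupp.linearCombination ℂ t2rWord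


section Aux
variable {A : Type} [DecidableEq A]

lemma wordSum_append (l₁ l₂ : List (List A)) :
    wordSum (l₁ ++ l₂) = wordSum l₁ + wordSum l₂ := by
  simp [wordSum]

lemma helper {M : Type} [AddCommMonoid M] [Fintype A] (g : A → List A → M) (t : List A) :
    ∑ a : A, ((deletions a t).map (g a)).sum =
      ∑ i : Fin t.length, g (t.get i) (t.eraseIdx i) := by
  induction t generalizing g with
  | nil => simp [deletions]
  | cons b s ih =>
    simp only [List.length_cons, Fin.sum_univ_succ]
    simp only [deletions, List.map_append, List.sum_append, List.map_map, Finset.sum_add_distrib]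
    simp only [Function.comp_def]
    rw [ih (fun a d => g a (b :: d))]
    congr 1
    · rw [Finset.sum_eq_single b]
      · simp
      · intro c _ hc; simp [Ne.symm hc]
      · simp

lemma insertions_eq (c : A) (v : List A) :
    insertions c v = (List.range (v.length + 1)).map (fun j => v.insertIdx j c) := by
  induction v with
  | nil => simp [insertions, List.range_succ]
  | cons b u ih =>
    rw [insertions, ih]
    simp only [List.length_cons]
    rw [List.range_succ_eq_map (n := u.length + 1)]
    simp [List.map_map, Function.comp_def, List.insertIdx_succ_cons]

lemma list_sum_range {M : Type} [AddCommMonoid M] (f : ℕ → M) (n : ℕ) :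
    ((List.range n).map f).sum = ∑ j ∈ Finset.range n, f j := by
  induction n with
  | zero => simp
  | succ n ih =>
    rw [List.range_succ, Finset.sum_range_succ, List.map_append, List.sum_append, ih]
    simp

lemma wordSum_insertions (c : A) (v : List A) :
    wordSum (insertions c v) =
      ∑ j ∈ Finset.range (v.length + 1), Finsupp.single (v.insertIdx j c) (1 : ℂ) := by
  rw [insertions_eq, wordSum, List.map_map]
  simp only [Function.comp_def]
  rw [list_sum_range (fun j => Finsupp.single (v.insertIdx j c) (1 : ℂ))]

end Aux

/-- **Proposition 35(3), first equality.** The random-to-random operator factors as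
`R2R_n = ∑_{a ∈ A} sh_a ∘ ∂_a` on words of length `n`. -/
theorem r2r_eq_sum_sh_comp_del [Fintype A] (n : ℕ) (w : List A) (hw : w.length = n) :
    r2rOp (Finsupp.single w (1 : ℂ)) =
      ∑ a : A, shOp a (delOp a (Finsupp.single w (1 : ℂ))) := by
  subst hw
  have hdel : ∀ a : A, delOp a (Finsupp.single w (1 : ℂ)) = wordSum (deletions a w) := by
    intro a; simp [delOp]
  have hsh : ∀ (a : A) (l : List (List A)),
      shOp a (wordSum l) = (l.map (fun d => wordSum (insertions a d))).sum := by
    intro a l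
    rw [wordSum, map_list_sum, List.map_map]
    congr 1
    ext d
    simp [shOp]
  calc r2rOp (Finsupp.single w (1 : ℂ)) = r2rWord w := by simp [r2rOp]
    _ = ∑ i : Fin w.length, wordSum (insertions (w.get i) (w.eraseIdx i)) := by
        rw [r2rWord, ← Fin.sum_univ_eq_sum_range]
        refine Finset.sum_congr rfl fun i _ => ?_
        have h1 : w[(i : ℕ)]? = some (w.get i) := List.getElem?_eq_getElem i.isLt
        have h2 : (w.eraseIdx (i : ℕ)).length + 1 = w.length := by
          have hi : (i : ℕ) < w.length := i.isLt
          rw [List.length_eraseIdx_of_lt hi]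
          omega
        rw [wordSum_insertions, h2]
        refine Finset.sum_congr rfl fun j _ => ?_
        rw [moveCard, h1]
    _ = ∑ a : A, ((deletions a w).map (fun d => wordSum (insertions a d))).sum :=
        (helper (fun a d => wordSum (insertions a d)) w).symm
    _ = ∑ a : A, shOp a (delOp a (Finsupp.single w (1 : ℂ))) := by
        refine Finset.sum_congr rfl fun a _ => ?_
        rw [hdel, hsh]
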